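/- Let g be a Lie algebra over a field k of characteristic zero and let r ∈ U(g)⊗U(g) lie in the image of g⊗g with τ(r) = −r. Suppose there exists f₂ ∈ U(g)⊗U(g) such that (1⊗r)·(id⊗Δ)(r) − (r⊗1)·(Δ⊗id)(r) = 1⊗f₂ − (Δ⊗id)(f₂) + (id⊗Δ)(f₂) − f₂⊗1 (that is, the degree-2 part of the 2-cocycle equation for a twist 1 + r·h + f₂·h² + ... holds). Then r satisfies the classical Yang–Baxter equation in U(g)⊗U(g)⊗U(g): [r₂₃, r₁₃] + [r₂₃, r₁₂] + [r₁₃, r₁₂] = 0. -/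

import Mathlib

open TensorProduct

noncomputable section

variable (k : Type*) [Field k] [CharZero k]
variable (g : Type*) [LieRing g] [LieAlgebra k g]

/-- The canonical linear map `g → U(g)`. -/
def ιU : g →ₗ[k] UniversalEnvelopingAlgebra k g :=
  letI : LieRing (UniversalEnvelopingAlgebra k g) := LieRing.ofAssociativeRing
  (UniversalEnvelopingAlgebra.ι k).toLinearMap

/-- The canonical map `g ⊗ g → U(g) ⊗ U(g)`; its range is "the image of `g ⊗ g`". -/
def ιι : g ⊗[k] g →ₗ[k]
    UniversalEnvelopingAlgebra k g ⊗[k] UniversalEnvelopingAlgebra k g :=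
  TensorProduct.map (ιU k g) (ιU k g)

/-- The flip automorphism of `U(g) ⊗ U(g)`. -/
def τU : UniversalEnvelopingAlgebra k g ⊗[k] UniversalEnvelopingAlgebra k g ≃ₐ[k]
    UniversalEnvelopingAlgebra k g ⊗[k] UniversalEnvelopingAlgebra k g :=
  Algebra.TensorProduct.comm k _ _

/-- The associator for `U(g)`. -/
def αU : (UniversalEnvelopingAlgebra k g ⊗[k] UniversalEnvelopingAlgebra k g) ⊗[k]
      UniversalEnvelopingAlgebra k g ≃ₐ[k]
    UniversalEnvelopingAlgebra k g ⊗[k]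
      (UniversalEnvelopingAlgebra k g ⊗[k] UniversalEnvelopingAlgebra k g) :=
  Algebra.TensorProduct.assoc k k k _ _ _

/-- The alternation `Alt₂(X) = ½(X − τ(X))`. -/
def alt2 (X : UniversalEnvelopingAlgebra k g ⊗[k] UniversalEnvelopingAlgebra k g) :
    UniversalEnvelopingAlgebra k g ⊗[k] UniversalEnvelopingAlgebra k g :=
  (2 : k)⁻¹ • (X - τU k g X)

variable {g} in
/-- `X` is an additive 2-cocycle: `1⊗X + (id⊗Δ)(X) = X⊗1 + (Δ⊗id)(X)`. -/
def IsAdd2Cocycle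
    (Δ : UniversalEnvelopingAlgebra k g →ₐ[k]
      UniversalEnvelopingAlgebra k g ⊗[k] UniversalEnvelopingAlgebra k g)
    (X : UniversalEnvelopingAlgebra k g ⊗[k] UniversalEnvelopingAlgebra k g) : Prop :=
  (1 : UniversalEnvelopingAlgebra k g) ⊗ₜ[k] X +
      Algebra.TensorProduct.map (AlgHom.id k (UniversalEnvelopingAlgebra k g)) Δ X =
    αU k g (X ⊗ₜ[k] (1 : UniversalEnvelopingAlgebra k g) +
      Algebra.TensorProduct.map Δ (AlgHom.id k (UniversalEnvelopingAlgebra k g)) X)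

/-- `r₁₂ = r ⊗ 1` in `U(g)^{⊗3}`. -/
def u12 (r : UniversalEnvelopingAlgebra k g ⊗[k] UniversalEnvelopingAlgebra k g) :
    UniversalEnvelopingAlgebra k g ⊗[k]
      (UniversalEnvelopingAlgebra k g ⊗[k] UniversalEnvelopingAlgebra k g) :=
  αU k g (r ⊗ₜ[k] (1 : UniversalEnvelopingAlgebra k g))

/-- `r₂₃ = 1 ⊗ r` in `U(g)^{⊗3}`. -/
def u23 (r : UniversalEnvelopingAlgebra k g ⊗[k] UniversalEnvelopingAlgebra k g) :
    UniversalEnvelopingAlgebra k g ⊗[k]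
      (UniversalEnvelopingAlgebra k g ⊗[k] UniversalEnvelopingAlgebra k g) :=
  (1 : UniversalEnvelopingAlgebra k g) ⊗ₜ[k] r

/-- `r₁₃ = (id ⊗ τ)(r ⊗ 1)` in `U(g)^{⊗3}`. -/
def u13 (r : UniversalEnvelopingAlgebra k g ⊗[k] UniversalEnvelopingAlgebra k g) :
    UniversalEnvelopingAlgebra k g ⊗[k]
      (UniversalEnvelopingAlgebra k g ⊗[k] UniversalEnvelopingAlgebra k g) :=
  Algebra.TensorProduct.map (AlgHom.id k (UniversalEnvelopingAlgebra k g)) (τU k g).toAlgHom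
    (αU k g (r ⊗ₜ[k] (1 : UniversalEnvelopingAlgebra k g)))

local notation "Ug" => UniversalEnvelopingAlgebra k g

section

attribute [local instance 100] LieRing.ofAssociativeRing

/-! ### Auxiliary machinery: the `S₃`-action on `U(g)⊗U(g)⊗U(g)` and alternation -/

/-- Swap of the last two tensor factors. -/
def p23 : Ug ⊗[k] (Ug ⊗[k] Ug) →ₐ[k] Ug ⊗[k] (Ug ⊗[k] Ug) :=
  Algebra.TensorProduct.map (AlgHom.id k Ug) (τU k g).toAlgHom

/-- Swap of the first two tensor factors. -/
def p12 : Ug ⊗[k] (Ug ⊗[k] Ug) →ₐ[k] Ug ⊗[k] (Ug ⊗[k] Ug) :=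
  ((αU k g).toAlgHom.comp
    (Algebra.TensorProduct.map (τU k g).toAlgHom (AlgHom.id k Ug))).comp
    (αU k g).symm.toAlgHom

lemma p23_tmul (x y z : Ug) : p23 k g (x ⊗ₜ[k] (y ⊗ₜ[k] z)) = x ⊗ₜ[k] (z ⊗ₜ[k] y) := by
  simp [p23, τU]

lemma p12_tmul (x y z : Ug) : p12 k g (x ⊗ₜ[k] (y ⊗ₜ[k] z)) = y ⊗ₜ[k] (x ⊗ₜ[k] z) := by
  simp [p12, τU, αU, Algebra.TensorProduct.assoc_symm_tmul, Algebra.TensorProduct.assoc_tmul]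

lemma p23_p23 (X : Ug ⊗[k] (Ug ⊗[k] Ug)) : p23 k g (p23 k g X) = X := by
  have h : (p23 k g).comp (p23 k g) = AlgHom.id k _ := by
    ext x <;> simp [p23, τU, Algebra.TensorProduct.one_def]
  exact congrArg (· X) (congrArg DFunLike.coe h)

lemma p12_p12 (X : Ug ⊗[k] (Ug ⊗[k] Ug)) : p12 k g (p12 k g X) = X := by
  have h : (p12 k g).comp (p12 k g) = AlgHom.id k _ := by
    ext x <;> simp [p12, τU, αU, Algebra.TensorProduct.one_def,
      Algebra.TensorProduct.assoc_symm_tmul, Algebra.TensorProduct.assoc_tmul]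
  exact congrArg (· X) (congrArg DFunLike.coe h)

lemma braid (X : Ug ⊗[k] (Ug ⊗[k] Ug)) :
    p12 k g (p23 k g (p12 k g X)) = p23 k g (p12 k g (p23 k g X)) := by
  have h : (p12 k g).comp ((p23 k g).comp (p12 k g)) =
      (p23 k g).comp ((p12 k g).comp (p23 k g)) := by
    ext x <;> simp [p12, p23, τU, αU, Algebra.TensorProduct.one_def,
      Algebra.TensorProduct.assoc_symm_tmul, Algebra.TensorProduct.assoc_tmul]
  exact congrArg (· X) (congrArg DFunLike.coe h)

/- evaluation of the `uᵢⱼ` on pure tensors, and linearity -/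

lemma u12_tmul (x y : Ug) : u12 k g (x ⊗ₜ[k] y) = x ⊗ₜ[k] (y ⊗ₜ[k] (1 : Ug)) := by
  simp [u12, αU, Algebra.TensorProduct.assoc_tmul]

lemma u13_tmul (x y : Ug) : u13 k g (x ⊗ₜ[k] y) = x ⊗ₜ[k] ((1 : Ug) ⊗ₜ[k] y) := by
  simp [u13, αU, τU, Algebra.TensorProduct.assoc_tmul]

lemma u12_add (a b : Ug ⊗[k] Ug) : u12 k g (a + b) = u12 k g a + u12 k g b := by
  simp [u12, TensorProduct.add_tmul]
lemma u13_add (a b : Ug ⊗[k] Ug) : u13 k g (a + b) = u13 k g a + u13 k g b := by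
  simp [u13, TensorProduct.add_tmul]
lemma u23_add (a b : Ug ⊗[k] Ug) : u23 k g (a + b) = u23 k g a + u23 k g b := by
  simp [u23, TensorProduct.tmul_add]
lemma u12_neg (a : Ug ⊗[k] Ug) : u12 k g (-a) = -u12 k g a := by
  simp [u12, TensorProduct.neg_tmul]
lemma u13_neg (a : Ug ⊗[k] Ug) : u13 k g (-a) = -u13 k g a := by
  simp [u13, TensorProduct.neg_tmul]
lemma u23_neg (a : Ug ⊗[k] Ug) : u23 k g (-a) = -u23 k g a := by
  simp [u23, TensorProduct.tmul_neg]
lemma u12_zero : u12 k g 0 = 0 := by simp [u12, TensorProduct.zero_tmul]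
lemma u13_zero : u13 k g 0 = 0 := by simp [u13, TensorProduct.zero_tmul]
lemma u23_zero : u23 k g 0 = 0 := by simp [u23, TensorProduct.tmul_zero]

/- action of the transpositions on the `uᵢⱼ` -/

lemma p23_u12 (r : Ug ⊗[k] Ug) : p23 k g (u12 k g r) = u13 k g r := rfl

lemma p23_u13 (r : Ug ⊗[k] Ug) : p23 k g (u13 k g r) = u12 k g r := by
  rw [← p23_u12, p23_p23]

lemma p23_u23 (r : Ug ⊗[k] Ug) : p23 k g (u23 k g r) = u23 k g (τU k g r) := by
  simp [p23, u23]

lemma p12_u12 (r : Ug ⊗[k] Ug) : p12 k g (u12 k g r) = u12 k g (τU k g r) := by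
  simp [p12, u12]

lemma p12_u23 (r : Ug ⊗[k] Ug) : p12 k g (u23 k g r) = u13 k g r := by
  induction r using TensorProduct.induction_on with
  | zero => simp [u23_zero, u13_zero, map_zero (p12 k g)]
  | tmul x y => rw [show u23 k g (x ⊗ₜ[k] y) = (1 : Ug) ⊗ₜ[k] (x ⊗ₜ[k] y) from rfl,
      p12_tmul, ← u13_tmul]
  | add a b ha hb => rw [u23_add, map_add, ha, hb, u13_add]

lemma p12_u13 (r : Ug ⊗[k] Ug) : p12 k g (u13 k g r) = u23 k g r := by
  rw [← p12_u23, p12_p12]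


/-- Abstract form of the alternation computation. -/
lemma alt3_abstract {A : Type*} [Ring A] {F : Type*} [FunLike F A A] [RingHomClass F A A]
    (P Q : F) (a b c : A)
    (hPa : P a = -a) (hPb : P b = c) (hPc : P c = b)
    (hQa : Q a = b) (hQb : Q b = a) (hQc : Q c = -c) :
    (c*(a+b) - a*(b+c)) - P (c*(a+b) - a*(b+c)) - Q (c*(a+b) - a*(b+c))
      + P (Q (c*(a+b) - a*(b+c))) + Q (P (c*(a+b) - a*(b+c)))
      - Q (P (Q (c*(a+b) - a*(b+c)))) =
    ((c*b - b*c) + (c*a - a*c) + (b*a - a*b)) + ((c*b - b*c) + (c*a - a*c) + (b*a - a*b))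
      + ((c*b - b*c) + (c*a - a*c) + (b*a - a*b)) + ((c*b - b*c) + (c*a - a*c) + (b*a - a*b)) := by
  simp only [map_sub, map_add, map_mul, map_neg, hPa, hPb, hPc, hQa, hQb, hQc,
    mul_neg, neg_mul, neg_neg]
  noncomm_ring

/-! ### The alternation operator -/

/-- The total alternation over `S₃`. -/
def alt3 (X : Ug ⊗[k] (Ug ⊗[k] Ug)) : Ug ⊗[k] (Ug ⊗[k] Ug) :=
  X - p12 k g X - p23 k g X + p12 k g (p23 k g X) + p23 k g (p12 k g X) -
    p23 k g (p12 k g (p23 k g X))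

lemma alt3_add (X Y : Ug ⊗[k] (Ug ⊗[k] Ug)) : alt3 k g (X + Y) = alt3 k g X + alt3 k g Y := by
  simp only [alt3, map_add]; abel

lemma alt3_sub (X Y : Ug ⊗[k] (Ug ⊗[k] Ug)) : alt3 k g (X - Y) = alt3 k g X - alt3 k g Y := by
  simp only [alt3, map_sub]; abel

lemma alt3_of_p23_fixed {X : Ug ⊗[k] (Ug ⊗[k] Ug)} (h : p23 k g X = X) : alt3 k g X = 0 := by
  simp only [alt3, h]; abel

lemma alt3_of_p12_fixed {X : Ug ⊗[k] (Ug ⊗[k] Ug)} (h : p12 k g X = X) : alt3 k g X = 0 := by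
  have hb : p23 k g (p12 k g (p23 k g X)) = p12 k g (p23 k g X) := by
    rw [← braid, h]
  simp only [alt3, h, hb]; abel

lemma alt3_p23 (X : Ug ⊗[k] (Ug ⊗[k] Ug)) : alt3 k g (p23 k g X) = -alt3 k g X := by
  simp only [alt3, p23_p23]; abel

lemma alt3_p12 (X : Ug ⊗[k] (Ug ⊗[k] Ug)) : alt3 k g (p12 k g X) = -alt3 k g X := by
  have h1 : p12 k g (p23 k g (p12 k g X)) = p23 k g (p12 k g (p23 k g X)) := braid k g X
  have h2 : p23 k g (p12 k g (p23 k g (p12 k g X))) = p12 k g (p23 k g X) := by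
    rw [braid, p23_p23]
  simp only [alt3, p12_p12, p23_p23, h1, h2]; abel
/-! ### Cocommutativity and primitivity -/

variable {g} in
lemma cocomm (Δ : Ug →ₐ[k] Ug ⊗[k] Ug)
    (hΔ : ∀ x : g, Δ (ιU k g x) = ιU k g x ⊗ₜ[k] 1 + 1 ⊗ₜ[k] ιU k g x) :
    (τU k g).toAlgHom.comp Δ = Δ := by
  ext x
  show τU k g (Δ (ιU k g x)) = Δ (ιU k g x)
  rw [hΔ x, map_add]
  simp [τU, add_comm]

variable {g} in
lemma p23_fix_mapIdΔ (Δ : Ug →ₐ[k] Ug ⊗[k] Ug)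
    (hc : (τU k g).toAlgHom.comp Δ = Δ) (f : Ug ⊗[k] Ug) :
    p23 k g (Algebra.TensorProduct.map (AlgHom.id k Ug) Δ f) =
      Algebra.TensorProduct.map (AlgHom.id k Ug) Δ f := by
  rw [p23, ← AlgHom.comp_apply, ← Algebra.TensorProduct.map_id_comp, hc]

variable {g} in
lemma p12_fix_mapΔId (Δ : Ug →ₐ[k] Ug ⊗[k] Ug)
    (hc : (τU k g).toAlgHom.comp Δ = Δ) (f : Ug ⊗[k] Ug) :
    p12 k g (αU k g (Algebra.TensorProduct.map Δ (AlgHom.id k Ug) f)) =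
      αU k g (Algebra.TensorProduct.map Δ (AlgHom.id k Ug) f) := by
  have h1 : ∀ Y, p12 k g (αU k g Y) =
      αU k g (Algebra.TensorProduct.map (τU k g).toAlgHom (AlgHom.id k Ug) Y) := by
    intro Y; simp [p12]
  rw [h1, ← AlgHom.comp_apply, ← Algebra.TensorProduct.map_comp (τU k g).toAlgHom Δ (AlgHom.id k Ug) (AlgHom.id k Ug), hc,
    AlgHom.id_comp]

variable {g} in
lemma mapIdΔ_range (Δ : Ug →ₐ[k] Ug ⊗[k] Ug)
    (hΔ : ∀ x : g, Δ (ιU k g x) = ιU k g x ⊗ₜ[k] 1 + 1 ⊗ₜ[k] ιU k g x)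
    {r : Ug ⊗[k] Ug} (hr : r ∈ LinearMap.range (ιι k g)) :
    Algebra.TensorProduct.map (AlgHom.id k Ug) Δ r = u12 k g r + u13 k g r := by
  obtain ⟨t, rfl⟩ := hr
  induction t using TensorProduct.induction_on with
  | zero => simp [u12_zero, u13_zero]
  | tmul x y =>
      rw [show ιι k g (x ⊗ₜ[k] y) = ιU k g x ⊗ₜ[k] ιU k g y from rfl,
        Algebra.TensorProduct.map_tmul, AlgHom.coe_id, id_eq, hΔ y,
        TensorProduct.tmul_add, u12_tmul, u13_tmul]
  | add a b ha hb =>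
      rw [map_add, map_add, ha, hb, u12_add, u13_add]; abel

variable {g} in
lemma mapΔId_range (Δ : Ug →ₐ[k] Ug ⊗[k] Ug)
    (hΔ : ∀ x : g, Δ (ιU k g x) = ιU k g x ⊗ₜ[k] 1 + 1 ⊗ₜ[k] ιU k g x)
    {r : Ug ⊗[k] Ug} (hr : r ∈ LinearMap.range (ιι k g)) :
    αU k g (Algebra.TensorProduct.map Δ (AlgHom.id k Ug) r) = u13 k g r + u23 k g r := by
  obtain ⟨t, rfl⟩ := hr
  induction t using TensorProduct.induction_on with
  | zero => simp [u13_zero, u23_zero]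
  | tmul x y =>
      rw [show ιι k g (x ⊗ₜ[k] y) = ιU k g x ⊗ₜ[k] ιU k g y from rfl,
        Algebra.TensorProduct.map_tmul, AlgHom.coe_id, id_eq, hΔ x,
        TensorProduct.add_tmul, map_add, u13_tmul]
      simp [αU, u23, Algebra.TensorProduct.assoc_tmul]
  | add a b ha hb =>
      rw [map_add, map_add, map_add, ha, hb, u13_add, u23_add]; abel
end

/-- If the degree-2 part of the 2-cocycle equation for a formal twist
`1 + r·h + f₂·h² + ⋯` holds for a skew-symmetric `r` in the image of `g ⊗ g`, then `r`
satisfies the classical Yang–Baxter equation. -/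
theorem degree_two_gives_CYBE
    (Δ : Ug →ₐ[k] Ug ⊗[k] Ug)
    (hΔ : ∀ x : g, Δ (ιU k g x) = ιU k g x ⊗ₜ[k] 1 + 1 ⊗ₜ[k] ιU k g x)
    (r : Ug ⊗[k] Ug)
    (hr : r ∈ LinearMap.range (ιι k g)) (hra : τU k g r = -r)
    (f₂ : Ug ⊗[k] Ug)
    (hdeg2 :
      ((1 : Ug) ⊗ₜ[k] r) * Algebra.TensorProduct.map (AlgHom.id k Ug) Δ r -
          αU k g ((r ⊗ₜ[k] (1 : Ug)) * Algebra.TensorProduct.map Δ (AlgHom.id k Ug) r) =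
        (1 : Ug) ⊗ₜ[k] f₂ -
          αU k g (Algebra.TensorProduct.map Δ (AlgHom.id k Ug) f₂) +
          Algebra.TensorProduct.map (AlgHom.id k Ug) Δ f₂ -
          αU k g (f₂ ⊗ₜ[k] (1 : Ug))) :
    (u23 k g r * u13 k g r - u13 k g r * u23 k g r) +
        (u23 k g r * u12 k g r - u12 k g r * u23 k g r) +
        (u13 k g r * u12 k g r - u12 k g r * u13 k g r) = 0 := by
  have hc := cocomm k Δ hΔ
  -- Rewrite the quadratic side of `hdeg2` in terms of `u12, u13, u23`.
  have hL :
      u23 k g r * (u12 k g r + u13 k g r) - u12 k g r * (u13 k g r + u23 k g r) =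
        u23 k g f₂ -
          αU k g (Algebra.TensorProduct.map Δ (AlgHom.id k Ug) f₂) +
          Algebra.TensorProduct.map (AlgHom.id k Ug) Δ f₂ -
          u12 k g f₂ := by
    have h1 : ((1 : Ug) ⊗ₜ[k] r) * Algebra.TensorProduct.map (AlgHom.id k Ug) Δ r =
        u23 k g r * (u12 k g r + u13 k g r) := by
      rw [mapIdΔ_range k Δ hΔ hr]; rfl
    have h2 : αU k g ((r ⊗ₜ[k] (1 : Ug)) * Algebra.TensorProduct.map Δ (AlgHom.id k Ug) r) =
        u12 k g r * (u13 k g r + u23 k g r) := by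
      rw [map_mul, mapΔId_range k Δ hΔ hr]; rfl
    rw [← h1, ← h2, hdeg2]; rfl
  -- The alternation kills the right-hand side.
  have hRHS : alt3 k g (u23 k g f₂ -
      αU k g (Algebra.TensorProduct.map Δ (AlgHom.id k Ug) f₂) +
      Algebra.TensorProduct.map (AlgHom.id k Ug) Δ f₂ -
      u12 k g f₂) = 0 := by
    rw [alt3_sub, alt3_add, alt3_sub,
      alt3_of_p12_fixed k g (p12_fix_mapΔId k Δ hc f₂),
      alt3_of_p23_fixed k g (p23_fix_mapIdΔ k Δ hc f₂)]
    have : u12 k g f₂ = p23 k g (p12 k g (u23 k g f₂)) := by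
      rw [p12_u23, p23_u13]
    rw [this, alt3_p23, alt3_p12, neg_neg]
    abel
  -- The alternation of the left-hand side is four times the CYBE expression.
  have e23 : p23 k g (u23 k g r) = -(u23 k g r) := by rw [p23_u23, hra, u23_neg]
  have e12 : p12 k g (u12 k g r) = -(u12 k g r) := by rw [p12_u12, hra, u12_neg]
  have hmain := alt3_abstract (p12 k g) (p23 k g) (u12 k g r) (u13 k g r) (u23 k g r)
    e12 (p12_u13 k g r) (p12_u23 k g r) (p23_u12 k g r) (p23_u13 k g r) e23
  set C := (u23 k g r * u13 k g r - u13 k g r * u23 k g r) +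
      (u23 k g r * u12 k g r - u12 k g r * u23 k g r) +
      (u13 k g r * u12 k g r - u12 k g r * u13 k g r) with hC
  have halt : alt3 k g (u23 k g r * (u12 k g r + u13 k g r) -
      u12 k g r * (u13 k g r + u23 k g r)) = C + C + C + C := hmain
  have h4 : C + C + C + C = 0 := by
    rw [← halt, hL, hRHS]
  have h4k : (4 : k) • C = 0 := by
    rw [show (4 : k) • C = C + C + C + C by module]; exact h4
  rcases smul_eq_zero.mp h4k with h | h
  · exact absurd h (by norm_num)
  · exact h

end
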